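/- Let n ≥ 3 be an integer and let x, y ∈ V satisfy 1 < d(x,y) < 1 + 1/n. Then there exist x', y' ∈ V such that E n x x', E n y y', ¬ E 0 x' y', and A x' y'. (Abstract form of Lemma 5.10 of the paper: nearby to any pair at distance just above 1 there is a pair, agreeing with x and y on the n-th subsurface respectively, that disagree on S_0 and differ by an elementary move.) -/

import Mathlib

/-- `x` and `y` are related: equal, `E 0`-equivalent, or joined by an elementary move. -/
def Related {V : Type*} (E : ℕ → V → V → Prop) (A : V → V → Prop) (x y : V) : Prop :=
  x = y ∨ E 0 x y ∨ A x y

open Classical in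
/-- The partial distance `d̂` (given a total value on unrelated pairs, which is
never used): `d̂(x,y) = 0` if `x = y`; if `x ≠ y` and `E 0 x y`, then
`d̂(x,y) = 1/n` where `n` is the least (equivalently, for a separating refining
family, the unique) integer with `¬ E n x y` — so `E (n-1) x y` and `¬ E n x y`;
and `d̂(x,y) = 1` if `¬ E 0 x y`. -/
noncomputable def dhat {V : Type*} (E : ℕ → V → V → Prop) (x y : V) : ℝ :=
  if x = y then 0
  else if E 0 x y then ((sInf {n : ℕ | ¬ E n x y} : ℕ) : ℝ)⁻¹
  else 1

/-- `c` is a chain of length-parameter `ℓ` from `x` to `y`: consecutive terms are related. -/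
def IsChain' {V : Type*} (E : ℕ → V → V → Prop) (A : V → V → Prop)
    (x y : V) (ℓ : ℕ) (c : ℕ → V) : Prop :=
  c 0 = x ∧ c ℓ = y ∧ ∀ i < ℓ, Related E A (c i) (c (i + 1))

/-- The length of a chain: the sum of `d̂` over consecutive pairs. -/
noncomputable def chainLength {V : Type*} (E : ℕ → V → V → Prop)
    (ℓ : ℕ) (c : ℕ → V) : ℝ :=
  ∑ i ∈ Finset.range ℓ, dhat E (c i) (c (i + 1))

/-- The distance `d(x,y)`: the infimum of the lengths of all chains from `x` to `y`. -/
noncomputable def pdist {V : Type*} (E : ℕ → V → V → Prop) (A : V → V → Prop)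
    (x y : V) : ℝ :=
  sInf {L : ℝ | ∃ ℓ c, IsChain' E A x y ℓ c ∧ L = chainLength E ℓ c}

section Aux
variable {V : Type*} {E : ℕ → V → V → Prop} {A : V → V → Prop}

lemma dhat_nonneg (x y : V) : 0 ≤ dhat E x y := by
  unfold dhat; split_ifs with h1 h2
  · exact le_rfl
  · positivity
  · norm_num

lemma dhat_le_one (x y : V) : dhat E x y ≤ 1 := by
  unfold dhat; split_ifs with h1 h2
  · norm_num
  · rcases Nat.eq_zero_or_pos (sInf {n : ℕ | ¬ E n x y}) with h | h
    · simp [h]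
    · rw [inv_le_one_iff₀]
      right
      exact_mod_cast h
  · exact le_rfl

lemma dhat_eq_one (hEquiv : ∀ n, Equivalence (E n)) {x y : V} (h : ¬ E 0 x y) :
    dhat E x y = 1 := by
  have hxy : x ≠ y := by rintro rfl; exact h ((hEquiv 0).refl x)
  unfold dhat; rw [if_neg hxy, if_neg h]

lemma en_of_small (hEquiv : ∀ n, Equivalence (E n)) {n : ℕ} {x y : V}
    (h0 : E 0 x y) (hd : dhat E x y < 1 / n) : E n x y := by
  by_cases hxy : x = y
  · exact hxy ▸ (hEquiv n).refl x
  · have hd' : dhat E x y = ((sInf {k : ℕ | ¬ E k x y} : ℕ) : ℝ)⁻¹ := by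
      unfold dhat; rw [if_neg hxy, if_pos h0]
    by_contra hEn
    have hm_mem : sInf {k : ℕ | ¬ E k x y} ∈ {k : ℕ | ¬ E k x y} := Nat.sInf_mem ⟨n, hEn⟩
    have hm_le : sInf {k : ℕ | ¬ E k x y} ≤ n := Nat.sInf_le hEn
    have hm0 : 0 < sInf {k : ℕ | ¬ E k x y} := by
      rcases Nat.eq_zero_or_pos (sInf {k : ℕ | ¬ E k x y}) with h | h
      · exact absurd h0 (h ▸ hm_mem)
      · exact h
    have hle : (1:ℝ)/n ≤ ((sInf {k : ℕ | ¬ E k x y} : ℕ) : ℝ)⁻¹ := by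
      rw [one_div]
      apply inv_anti₀
      · exact_mod_cast hm0
      · exact_mod_cast hm_le
    rw [hd'] at hd
    linarith

lemma en_chain (hEquiv : ∀ n, Equivalence (E n)) (m : ℕ) (c : ℕ → V) :
    ∀ a b : ℕ, a ≤ b → (∀ i, a ≤ i → i < b → E m (c i) (c (i+1))) → E m (c a) (c b) := by
  intro a b hab
  induction b, hab using Nat.le_induction with
  | base => intro _; exact (hEquiv m).refl _
  | succ b hab ih =>
    intro h
    exact (hEquiv m).trans
      (ih fun i h1 h2 => h i h1 (h2.trans (Nat.lt_succ_self b)))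
      (h b hab (Nat.lt_succ_self b))

end Aux


/-- Abstract form of Lemma 5.10: for `n ≥ 3` and `x, y ∈ V` with
`1 < d(x,y) < 1 + 1/n`, there exist `x', y'` with `E n x x'`, `E n y y'`,
`¬ E 0 x' y'`, and `A x' y'` (they differ by an elementary move). -/
theorem exists_close_elementary_pair (V : Type*) (E : ℕ → V → V → Prop)
    (A : V → V → Prop)
    (hEquiv : ∀ n, Equivalence (E n))
    (hRefine : ∀ n x y, E (n + 1) x y → E n x y)
    (hSep : ∀ x y : V, x ≠ y → ∃ n : ℕ, ¬ E n x y)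
    (hAsymm : ∀ x y : V, A x y → A y x)
    (hAirrefl : ∀ x : V, ¬ A x x)
    (hChain : ∀ x y : V, ∃ z : V, E 0 x z ∧ ∃ ℓ c, IsChain' E A z y ℓ c)
    (n : ℕ) (hn : 3 ≤ n) (x y : V)
    (h1 : 1 < pdist E A x y) (h2 : pdist E A x y < 1 + 1 / (n : ℝ)) :
    ∃ x' y' : V, E n x x' ∧ E n y y' ∧ ¬ E 0 x' y' ∧ A x' y' := by
  set S : Set ℝ := {L : ℝ | ∃ ℓ c, IsChain' E A x y ℓ c ∧ L = chainLength E ℓ c} with hS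
  have hnR : (3:ℝ) ≤ n := by exact_mod_cast hn
  have hnpos : (0:ℝ) < n := by linarith
  have hinv1 : (1:ℝ)/n < 1 := by rw [div_lt_one hnpos]; linarith
  -- S is nonempty
  have hne : S.Nonempty := by
    obtain ⟨z, hz, ℓ, c, hc0, hcl, hcstep⟩ := hChain x y
    refine ⟨chainLength E (ℓ+1) (fun i => if i = 0 then x else c (i-1)), ℓ+1,
      (fun i => if i = 0 then x else c (i-1)), ⟨?_, ?_, ?_⟩, rfl⟩
    · simp
    · simp only [Nat.succ_ne_zero, if_neg, Nat.add_sub_cancel]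
      exact hcl
    · intro i hi
      rcases Nat.eq_zero_or_pos i with rfl | hpos
      · simpa [hc0, Related] using Or.inr (Or.inl hz)
      · obtain ⟨k, rfl⟩ := Nat.exists_eq_add_of_lt hpos
        simp only [Nat.add_comm 0 k]
        have h1k : k + 1 ≠ 0 := Nat.succ_ne_zero k
        have h2k : k + 1 + 1 ≠ 0 := Nat.succ_ne_zero _
        simp only [if_neg h1k, if_neg h2k, Nat.add_sub_cancel]
        exact hcstep k (by omega)
  -- S is bounded below
  have hbdd : BddBelow S := by
    refine ⟨0, ?_⟩
    rintro L ⟨ℓ, c, _, rfl⟩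
    exact Finset.sum_nonneg fun i _ => dhat_nonneg _ _
  -- extract a chain of length < 1 + 1/n
  obtain ⟨L, hLS, hL⟩ := exists_lt_of_csInf_lt hne h2
  obtain ⟨ℓ, c, ⟨hc0, hcl, hcstep⟩, rfl⟩ := hLS
  -- there is a "bad" index j with ¬ E 0 (c j) (c (j+1))
  have hbad : ∃ j, j < ℓ ∧ ¬ E 0 (c j) (c (j+1)) := by
    by_contra hno
    push_neg at hno
    have hE0 : E 0 x y := by
      have := en_chain hEquiv 0 c 0 ℓ (Nat.zero_le ℓ) fun i _ hi => hno i hi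
      rwa [hc0, hcl] at this
    have hmem : dhat E x y ∈ S := by
      refine ⟨1, fun i => if i = 0 then x else y, ⟨by simp, by simp, ?_⟩, ?_⟩
      · intro i hi
        interval_cases i
        simpa [Related] using Or.inr (Or.inl hE0)
      · simp [chainLength]
    have := csInf_le hbdd hmem
    have := dhat_le_one (E := E) x y
    rw [hS] at *
    unfold pdist at h1
    linarith
  obtain ⟨j, hj, hjbad⟩ := hbad
  have hdj : dhat E (c j) (c (j+1)) = 1 := dhat_eq_one hEquiv hjbad
  -- all other steps are E 0 steps
  have huniq : ∀ i, i < ℓ → i ≠ j → E 0 (c i) (c (i+1)) := by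
    by_contra hno
    push_neg at hno
    obtain ⟨j', hj', hjj', hj'bad⟩ := hno
    have hsub : ({j, j'} : Finset ℕ) ⊆ Finset.range ℓ := by
      intro i hi
      simp only [Finset.mem_insert, Finset.mem_singleton] at hi
      rcases hi with rfl | rfl <;> exact Finset.mem_range.mpr (by assumption)
    have h2le : (2:ℝ) ≤ chainLength E ℓ c := by
      have hsum : ∑ i ∈ ({j, j'} : Finset ℕ), dhat E (c i) (c (i+1)) = 2 := by
        rw [Finset.sum_pair (Ne.symm hjj')]
        rw [hdj, dhat_eq_one hEquiv hj'bad]; norm_num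
      calc (2:ℝ) = ∑ i ∈ ({j, j'} : Finset ℕ), dhat E (c i) (c (i+1)) := hsum.symm
        _ ≤ chainLength E ℓ c :=
          Finset.sum_le_sum_of_subset_of_nonneg hsub fun i _ _ => dhat_nonneg _ _
    linarith
  -- split off the bad term
  have hsplit : dhat E (c j) (c (j+1)) +
      ∑ i ∈ (Finset.range ℓ).erase j, dhat E (c i) (c (i+1)) = chainLength E ℓ c :=
    by simpa [chainLength] using Finset.add_sum_erase (Finset.range ℓ) (fun i => dhat E (c i) (c (i+1))) (Finset.mem_range.mpr hj)
  have hrest : ∑ i ∈ (Finset.range ℓ).erase j, dhat E (c i) (c (i+1)) < 1/n := by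
    rw [hdj] at hsplit
    linarith
  have hstep : ∀ i, i < ℓ → i ≠ j → E n (c i) (c (i+1)) := by
    intro i hi hij
    have hmem : i ∈ (Finset.range ℓ).erase j :=
      Finset.mem_erase.mpr ⟨hij, Finset.mem_range.mpr hi⟩
    have hle : dhat E (c i) (c (i+1)) ≤
        ∑ k ∈ (Finset.range ℓ).erase j, dhat E (c k) (c (k+1)) :=
      Finset.single_le_sum (f := fun k => dhat E (c k) (c (k+1))) (fun k _ => dhat_nonneg _ _) hmem
    exact en_of_small hEquiv (huniq i hi hij) (lt_of_le_of_lt hle hrest)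
  refine ⟨c j, c (j+1), ?_, ?_, hjbad, ?_⟩
  · have := en_chain hEquiv n c 0 j (Nat.zero_le j)
      fun i _ hi => hstep i (hi.trans hj) (Nat.ne_of_lt hi)
    rwa [hc0] at this
  · have := en_chain hEquiv n c (j+1) ℓ hj
      fun i h1i h2i => hstep i h2i (by omega)
    rw [hcl] at this
    exact (hEquiv n).symm this
  · rcases hcstep j hj with heq | hE0 | hA
    · exact absurd (heq ▸ (hEquiv 0).refl (c j)) hjbad
    · exact absurd hE0 hjbad
    · exact hA
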